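/- arXiv:2310.02196 — 2 statements merged into one kernel-verified Lean document; each statement's English description precedes it below -/
import Mathlib

section
/- Let 𝔅 be a Boolean subalgebra of P(ω) and M a subset of the unit ball of M(𝔅) that lies inside a free subset K of the dual unit ball of JL(𝔅). Then for every B ∈ 𝔅 and ε > 0 there exists a simple 𝔅-measurable function g such that |⟨μ, g⟩ − |μ(B)|| < ε for every μ ∈ M. -/
/-- Let `𝔅` be a Boolean subalgebra of `P(ω)`, `X = JL(𝔅)` the closure
of the span of the indicator functions `J B` (`B ∈ 𝔅`), and `K ⊆ B_{X*}` a free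
weak*-closed set. If `M ⊆ K`, then for every `B ∈ 𝔅` and `ε > 0` there is a simple
`𝔅`-measurable function `g` (an element of the span of the indicators) with
`|⟨μ, g⟩ − |μ(B)|| < ε` for all `μ ∈ M`. -/
theorem approx_abs_on_free_set
    {X : Type*} [NormedAddCommGroup X] [NormedSpace ℝ X] [CompleteSpace X]
    (𝔅 : Set (Set ℕ)) (J : Set ℕ → X)
    (hdense : Dense (↑(Submodule.span ℝ (J '' 𝔅)) : Set X))
    (K : Set (WeakDual ℝ X)) (hKclosed : IsClosed K)
    (hKball : ∀ μ ∈ K, ∀ x : X, |μ x| ≤ ‖x‖)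
    (hfree : ∀ f : C(K, ℝ), ∃ x : X, ∀ μ : K, f μ = (μ : WeakDual ℝ X) x)
    (M : Set (WeakDual ℝ X)) (hMK : M ⊆ K) :
    ∀ B ∈ 𝔅, ∀ ε > 0, ∃ g ∈ Submodule.span ℝ (J '' 𝔅),
      ∀ μ ∈ M, abs (μ g - abs (μ (J B))) < ε := by
  intro B hB ε hε
  -- the function μ ↦ |μ (J B)| is continuous on K
  have hcont : Continuous fun μ : K => |(μ : WeakDual ℝ X) (J B)| := by
    exact (continuous_abs.comp ((WeakDual.eval_continuous (J B)).comp continuous_subtype_val))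
  obtain ⟨x, hx⟩ := hfree ⟨_, hcont⟩
  -- pick g in the span close to x
  have hxcl := hdense x
  rw [Metric.mem_closure_iff] at hxcl
  obtain ⟨g, hg, hdist⟩ := hxcl ε hε
  refine ⟨g, hg, fun μ hμ => ?_⟩
  have hK := hMK hμ
  have hxeq : |μ (J B)| = μ x := hx ⟨μ, hK⟩
  have : μ g - |μ (J B)| = μ (g - x) := by
    rw [hxeq, map_sub]
  rw [this]
  calc |μ (g - x)| ≤ ‖g - x‖ := hKball μ hK _
    _ = dist g x := (dist_eq_norm g x).symm
    _ < ε := by rwa [dist_comm] at hdist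
end

section
/- Let c > 0, 0 < δ < c/11, a ≥ c, and r ≥ 1/2 be real numbers. Suppose real numbers s_n (n in an index set J₁) satisfy: |2a − (2ra + s_n)| ≤ δ(4 + 3r) for n ∈ J₂ and |2a − (−2ra + s_n)| ≤ δ(4 + 3r) for n ∈ J₁∖J₂, where J₂ ⊆ J₁. Then for every n ∈ J₁∖J₂ and k ∈ J₂ one has s_n − s_k ≥ 2r(2a − 3δ) − 8δ ≥ 2a − 11δ > 0. -/
/-- Key quantitative estimate (case `r ≥ 1/2`). -/
theorem key_estimate_large_r {ι : Type*} (c δ a r : ℝ) (J₁ J₂ : Set ι) (s : ι → ℝ)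
    (hc : 0 < c) (hδ0 : 0 < δ) (hδ : δ < c / 11) (ha : c ≤ a) (hr : 1 / 2 ≤ r)
    (hsub : J₂ ⊆ J₁)
    (h2 : ∀ n ∈ J₂, |2 * a - (2 * r * a + s n)| ≤ δ * (4 + 3 * r))
    (h1 : ∀ n ∈ J₁ \ J₂, |2 * a - (-(2 * r * a) + s n)| ≤ δ * (4 + 3 * r)) :
    ∀ n ∈ J₁ \ J₂, ∀ k ∈ J₂,
      2 * r * (2 * a - 3 * δ) - 8 * δ ≤ s n - s k ∧
      2 * a - 11 * δ ≤ 2 * r * (2 * a - 3 * δ) - 8 * δ ∧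
      0 < 2 * a - 11 * δ := by
  intro n hn k hk
  have hn' := abs_le.mp (h1 n hn)
  have hk' := abs_le.mp (h2 k hk)
  refine ⟨by nlinarith, by nlinarith, by nlinarith⟩
end
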